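/- The set of solutions in non-negative integers of the congruence 5^x - 2^y ≡ 3 (mod 100) equals the set of solutions of the equation 5^x - 2^y = 3 over the integers, namely {(1,1)}. -/
import Mathlib

lemma key (x y : ℕ) (h : (100:ℤ) ∣ 5^x - 2^y - 3) : x = 1 ∧ y = 1 := by
  have h4 : (4:ℤ) ∣ 5^x - 2^y - 3 := dvd_trans (by norm_num) h
  have h25 : (25:ℤ) ∣ 5^x - 2^y - 3 := dvd_trans (by norm_num) h
  have h4' : ((5^x - 2^y - 3 : ℤ) : ZMod 4) = 0 :=
    (ZMod.intCast_zmod_eq_zero_iff_dvd _ 4).mpr h4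
  have h25' : ((5^x - 2^y - 3 : ℤ) : ZMod 25) = 0 :=
    (ZMod.intCast_zmod_eq_zero_iff_dvd _ 25).mpr h25
  push_cast at h4' h25'
  have h5 : (5:ZMod 4)^x = 1 := by
    rw [show (5:ZMod 4) = 1 from rfl, one_pow]
  rw [h5] at h4'
  have hy : y = 1 := by
    match y with
    | 0 => simp only [pow_zero] at h4'; exact absurd h4' (by decide)
    | 1 => rfl
    | (n+2) =>
      exfalso
      have : (2:ZMod 4)^(n+2) = 0 := by
        rw [pow_add]; simp [show (2:ZMod 4)^2 = 0 from rfl]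
      rw [this] at h4'
      exact absurd h4' (by decide)
  subst hy
  have hx : x = 1 := by
    match x with
    | 0 => simp only [pow_zero] at h25'; exact absurd h25' (by decide)
    | 1 => rfl
    | (n+2) =>
      exfalso
      have : (5:ZMod 25)^(n+2) = 0 := by
        rw [pow_add]; simp [show (5:ZMod 25)^2 = 0 from rfl]
      rw [this] at h25'
      exact absurd h25' (by decide)
  exact ⟨hx, rfl⟩

theorem cong_mod_100_iff_eq :
    {p : ℕ × ℕ | (100:ℤ) ∣ 5^p.1 - 2^p.2 - 3} =
      {p : ℕ × ℕ | (5:ℤ)^p.1 - 2^p.2 = 3} ∧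
    {p : ℕ × ℕ | (5:ℤ)^p.1 - 2^p.2 = 3} = {(1, 1)} := by
  have hsub : ∀ p : ℕ × ℕ, (100:ℤ) ∣ 5^p.1 - 2^p.2 - 3 → p = (1,1) := by
    rintro ⟨x, y⟩ h
    obtain ⟨hx, hy⟩ := key x y h
    simp [hx, hy]
  constructor
  · ext ⟨x, y⟩
    simp only [Set.mem_setOf_eq]
    constructor
    · intro h
      have := hsub (x, y) h
      simp only [Prod.mk.injEq] at this
      obtain ⟨hx, hy⟩ := this
      subst hx; subst hy; norm_num
    · intro h
      rw [show (5:ℤ)^x - 2^y - 3 = (5^x - 2^y) - 3 from rfl, h]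
      simp
  · ext ⟨x, y⟩
    simp only [Set.mem_setOf_eq, Set.mem_singleton_iff]
    constructor
    · intro h
      exact hsub (x, y) (by rw [show (5:ℤ)^x - 2^y - 3 = (5^x - 2^y) - 3 from rfl, h]; simp)
    · rintro h
      simp only [Prod.mk.injEq] at h
      obtain ⟨hx, hy⟩ := h
      subst hx; subst hy; norm_num
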